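/- arXiv:1210.2743 — 2 statements merged into one kernel-verified Lean document; each statement's English description precedes it below -/
import Mathlib

section
/- Let K be a field containing a primitive 6th root of unity ζ, and let α ∈ K be such that the Weierstrass curve E(α + α², α) : y² + (1 − α)xy − (α + α²)y = x³ − (α + α²)x² over K is nonsingular (i.e., its discriminant is nonzero). Then the point P = (0, 0) lies on the curve, has exact order 6 in the group of points, and ∑_{j=1}^{5} ζ^j x(jP) = −α(α + 2), where x(jP) denotes the x-coordinate of the point jP (which is an affine point for 1 ≤ j ≤ 5 since P has order 6). -/
open WeierstrassCurve.Affine WeierstrassCurve.Affine.Point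

private lemma some_eq_some' {K : Type*} [Field K] {W : WeierstrassCurve.Affine K}
    {x₁ y₁ x₂ y₂ : K} (h₁ : W.Nonsingular x₁ y₁) (h₂ : W.Nonsingular x₂ y₂)
    (hx : x₁ = x₂) (hy : y₁ = y₂) :
    WeierstrassCurve.Affine.Point.some _ _ h₁ = WeierstrassCurve.Affine.Point.some _ _ h₂ := by
  subst hx; subst hy; rfl

private lemma some_ne_zero' {K : Type*} [Field K] {W : WeierstrassCurve.Affine K}
    {x y : K} (h : W.Nonsingular x y) :
    WeierstrassCurve.Affine.Point.some _ _ h ≠ 0 := by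
  intro hh
  rw [WeierstrassCurve.Affine.Point.zero_def] at hh
  cases hh

/-- The `x`-coordinate of a nonsingular rational point on a Weierstrass curve
(with the point at infinity sent to `0`). -/
noncomputable def ptX {K : Type*} [Field K] {W : WeierstrassCurve.Affine K} : W.Point → K
  | .zero => 0
  | .some x _ _ => x

open Classical in
/-- **The `m = 6` family of Table 2.** On the nonsingular Weierstrass curve
`E(α + α², α) : y² + (1 - α)xy - (α + α²)y = x³ - (α + α²)x²` over a field containing a
primitive 6th root of unity `ζ`, the point `P = (0, 0)` is a nonsingular point of exact
order 6, and the character sum `∑_{j=1}^{5} ζ^j x(jP)` equals `-α(α + 2)`. -/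
theorem order_six_family_charSum {K : Type*} [Field K] (ζ : K) (hζ : IsPrimitiveRoot ζ 6)
    (α : K) (W : WeierstrassCurve.Affine K)
    (hW : W = { a₁ := 1 - α, a₂ := -(α + α ^ 2), a₃ := -(α + α ^ 2), a₄ := 0, a₆ := 0 })
    (hΔ : W.Δ ≠ 0) :
    ∃ h : W.Nonsingular 0 0, addOrderOf (WeierstrassCurve.Affine.Point.some _ _ h) = 6 ∧
      ∑ j ∈ Finset.Icc 1 5, ζ ^ j * ptX (j • WeierstrassCurve.Affine.Point.some _ _ h) =
        -(α * (α + 2)) := by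
  -- the discriminant factors as α⁶(α+1)³(9α+1)
  have hΔval : W.Δ = α ^ 6 * (α + 1) ^ 3 * (9 * α + 1) := by
    subst hW
    simp only [WeierstrassCurve.Δ, WeierstrassCurve.b₂, WeierstrassCurve.b₄,
      WeierstrassCurve.b₆, WeierstrassCurve.b₈]
    ring
  have hα : α ≠ 0 := by
    intro h; apply hΔ; rw [hΔval, h]; ring
  have hα1 : α + 1 ≠ 0 := by
    intro h; apply hΔ; rw [hΔval, show α = -1 by linear_combination h]; ring
  have hb : α + α ^ 2 ≠ 0 := by
    intro h
    exact mul_ne_zero hα hα1 (by linear_combination h)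
  -- coordinates of the multiples of P
  have h1 : W.Nonsingular 0 0 :=
    (W.equation_iff_nonsingular_of_Δ_ne_zero hΔ).mp (by rw [equation_iff]; subst hW; simp)
  have h2 : W.Nonsingular (α + α ^ 2) (α ^ 2 + α ^ 3) :=
    (W.equation_iff_nonsingular_of_Δ_ne_zero hΔ).mp (by rw [equation_iff]; subst hW; simp; ring)
  have h3 : W.Nonsingular α (α ^ 2) :=
    (W.equation_iff_nonsingular_of_Δ_ne_zero hΔ).mp (by rw [equation_iff]; subst hW; simp; ring)
  have h4 : W.Nonsingular (α + α ^ 2) 0 :=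
    (W.equation_iff_nonsingular_of_Δ_ne_zero hΔ).mp (by rw [equation_iff]; subst hW; simp; ring)
  have h5 : W.Nonsingular 0 (α + α ^ 2) :=
    (W.equation_iff_nonsingular_of_Δ_ne_zero hΔ).mp (by rw [equation_iff]; subst hW; simp; ring)
  set P : W.Point := WeierstrassCurve.Affine.Point.some _ _ h1 with hP
  -- addition computations
  have hney : (0 : K) ≠ W.negY 0 0 := by
    simp only [negY, hW]; intro h; exact hb (by linear_combination -h)
  have hs11 : W.slope 0 0 0 0 = 0 := by
    rw [slope_of_Y_ne rfl hney, hW]; simp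
  have add11 : P + P = WeierstrassCurve.Affine.Point.some _ _ h2 := by
    rw [hP, add_of_Y_ne hney]
    refine some_eq_some' _ _ ?_ ?_
    · rw [addX, hs11, hW]; ring
    · rw [addY, negAddY, negY, addX, hs11, hW]; ring
  have add21 : WeierstrassCurve.Affine.Point.some _ _ h2 + P =
      WeierstrassCurve.Affine.Point.some _ _ h3 := by
    rw [hP, add_of_X_ne hb]
    have hs : W.slope (α + α ^ 2) 0 (α ^ 2 + α ^ 3) 0 = α := by
      rw [slope_of_X_ne hb]
      rw [sub_zero, sub_zero, div_eq_iff hb]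
      ring
    refine some_eq_some' _ _ ?_ ?_
    · rw [addX, hs, hW]; ring
    · rw [addY, negAddY, negY, addX, hs, hW]; ring
  have add31 : WeierstrassCurve.Affine.Point.some _ _ h3 + P =
      WeierstrassCurve.Affine.Point.some _ _ h4 := by
    rw [hP, add_of_X_ne hα]
    have hs : W.slope α 0 (α ^ 2) 0 = α := by
      rw [slope_of_X_ne hα]
      field_simp
      ring
    refine some_eq_some' _ _ ?_ ?_
    · rw [addX, hs, hW]; ring
    · rw [addY, negAddY, negY, addX, hs, hW]; ring
  have add41 : WeierstrassCurve.Affine.Point.some _ _ h4 + P =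
      WeierstrassCurve.Affine.Point.some _ _ h5 := by
    rw [hP, add_of_X_ne hb]
    have hs : W.slope (α + α ^ 2) 0 0 0 = 0 := by
      rw [slope_of_X_ne hb]; simp
    refine some_eq_some' _ _ ?_ ?_
    · rw [addX, hs, hW]; ring
    · rw [addY, negAddY, negY, addX, hs, hW]; ring
  have add51 : WeierstrassCurve.Affine.Point.some _ _ h5 + P = 0 := by
    rw [hP]
    exact add_of_Y_eq rfl (by simp only [negY, hW]; ring)
  -- the nsmul values
  have e1 : (1 : ℕ) • P = P := one_nsmul P
  have e2 : (2 : ℕ) • P = WeierstrassCurve.Affine.Point.some _ _ h2 := by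
    rw [two_nsmul, add11]
  have e3 : (3 : ℕ) • P = WeierstrassCurve.Affine.Point.some _ _ h3 := by
    rw [show (3 : ℕ) = 2 + 1 from rfl, succ_nsmul, e2, add21]
  have e4 : (4 : ℕ) • P = WeierstrassCurve.Affine.Point.some _ _ h4 := by
    rw [show (4 : ℕ) = 3 + 1 from rfl, succ_nsmul, e3, add31]
  have e5 : (5 : ℕ) • P = WeierstrassCurve.Affine.Point.some _ _ h5 := by
    rw [show (5 : ℕ) = 4 + 1 from rfl, succ_nsmul, e4, add41]
  have e6 : (6 : ℕ) • P = 0 := by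
    rw [show (6 : ℕ) = 5 + 1 from rfl, succ_nsmul, e5, add51]
  refine ⟨h1, ?_, ?_⟩
  · -- order is exactly 6
    rw [addOrderOf_eq_iff (by norm_num)]
    refine ⟨e6, ?_⟩
    intro m hm hm'
    interval_cases m
    · rw [e1]; exact some_ne_zero' h1
    · rw [e2]; exact some_ne_zero' h2
    · rw [e3]; exact some_ne_zero' h3
    · rw [e4]; exact some_ne_zero' h4
    · rw [e5]; exact some_ne_zero' h5
  · -- the character sum
    have hz6 : ζ ^ 6 = 1 := hζ.pow_eq_one
    have hz3 : ζ ^ 3 = -1 :=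
      (hζ.pow (by norm_num) (show 6 = 3 * 2 from rfl)).eq_neg_one_of_two_right
    have hz2 : ζ ^ 4 + ζ ^ 2 + 1 = 0 := by
      have hfac : (ζ ^ 2 - 1) * (ζ ^ 4 + ζ ^ 2 + 1) = 0 := by linear_combination hz6
      rcases mul_eq_zero.mp hfac with h | h
      · exact absurd (show ζ ^ 2 = 1 by linear_combination h) (hζ.pow_ne_one_of_pos_of_lt two_ne_zero (by norm_num))
      · exact h
    rw [show Finset.Icc (1 : ℕ) 5 = {1, 2, 3, 4, 5} from rfl]
    rw [Finset.sum_insert (by decide), Finset.sum_insert (by decide),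
      Finset.sum_insert (by decide), Finset.sum_insert (by decide), Finset.sum_singleton]
    rw [e1, e2, e3, e4, e5, hP]
    show ζ ^ 1 * 0 + (ζ ^ 2 * (α + α ^ 2) + (ζ ^ 3 * α + (ζ ^ 4 * (α + α ^ 2) + ζ ^ 5 * 0))) =
      -(α * (α + 2))
    linear_combination (α + α ^ 2) * hz2 + α * hz3
end

section
/- Let K be a field containing a primitive 8th root of unity ζ, and let α ∈ K with α ≠ 0. Set β = (2α − 1)(α − 1) and γ = β/α, and assume the Weierstrass curve E(β, γ) : y² + (1 − γ)xy − βy = x³ − βx² over K is nonsingular (i.e., its discriminant is nonzero). Then the point P = (0, 0) lies on the curve, has exact order 8 in the group of points, and ∑_{j=1}^{7} ζ^j x(jP) = −α^{−1}(α − 1)(α² + 2λα − λ), where λ = ζ + ζ^{−1} and x(jP) denotes the x-coordinate of the point jP (which is an affine point for 1 ≤ j ≤ 7 since P has order 8). -/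
open WeierstrassCurve.Affine WeierstrassCurve.Affine.Point

set_option maxHeartbeats 4000000

private lemma some_congr' {K : Type*} [Field K] {W : WeierstrassCurve.Affine K} {x₁ y₁ x₂ y₂ : K}
    (h₁ : W.Nonsingular x₁ y₁) (h₂ : W.Nonsingular x₂ y₂) (hx : x₁ = x₂) (hy : y₁ = y₂) :
    Point.some _ _ h₁ = Point.some _ _ h₂ := by subst hx; subst hy; rfl

@[simp] lemma ptX_some {K : Type*} [Field K] {W : WeierstrassCurve.Affine K} {x y : K}
    (h : W.Nonsingular x y) : ptX (WeierstrassCurve.Affine.Point.some x y h) = x := rfl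

open Classical in
/-- **The `m = 8` family of Table 2 (Kubert's parametrization).** Let `α ≠ 0`,
`β = (2α - 1)(α - 1)` and `γ = β/α`. On the nonsingular Weierstrass curve
`E(β, γ) : y² + (1 - γ)xy - βy = x³ - βx² over a field containing a primitive 8th root of
unity `ζ`, the point `P = (0, 0)` is a nonsingular point of exact order 8, and the character
sum `∑_{j=1}^{7} ζ^j x(jP)` equals `-α⁻¹(α - 1)(α² + 2λα - λ)` where `λ = ζ + ζ⁻¹`. -/
theorem order_eight_family_charSum {K : Type*} [Field K] (ζ : K) (hζ : IsPrimitiveRoot ζ 8)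
    (α β γ : K) (hα : α ≠ 0) (hβ : β = (2 * α - 1) * (α - 1)) (hγ : γ = β / α)
    (W : WeierstrassCurve.Affine K)
    (hW : W = { a₁ := 1 - γ, a₂ := -β, a₃ := -β, a₄ := 0, a₆ := 0 })
    (hΔ : W.Δ ≠ 0) :
    ∃ h : W.Nonsingular 0 0, addOrderOf (WeierstrassCurve.Affine.Point.some 0 0 h) = 8 ∧
      ∑ j ∈ Finset.Icc 1 7, ζ ^ j * ptX (j • WeierstrassCurve.Affine.Point.some 0 0 h) =
        -α⁻¹ * (α - 1) * (α ^ 2 + 2 * (ζ + ζ⁻¹) * α - (ζ + ζ⁻¹)) := by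
  have hb : β ≠ 0 := by
    intro h
    apply hΔ
    have hg : γ = 0 := by rw [hγ, h, zero_div]
    simp [hW, h, hg, WeierstrassCurve.Δ, WeierstrassCurve.b₂, WeierstrassCurve.b₄,
      WeierstrassCurve.b₆, WeierstrassCurve.b₈]
  subst hβ hγ
  have h1 : α - 1 ≠ 0 := fun h => hb (by rw [h, mul_zero])
  have h2 : 2 * α - 1 ≠ 0 := fun h => hb (by rw [h, zero_mul])
  -- nonsingular points
  have hns : ∀ x y : K, (y ^ 2 + (1 - (2 * α - 1) * (α - 1) / α) * x * y
      + (-((2 * α - 1) * (α - 1))) * y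
      = x ^ 3 + (-((2 * α - 1) * (α - 1))) * x ^ 2 + 0 * x + 0) → W.Nonsingular x y := by
    intro x y h
    refine (WeierstrassCurve.Affine.equation_iff_nonsingular_of_Δ_ne_zero (W := W) hΔ).mp ((WeierstrassCurve.Affine.equation_iff (W := W) x y).mpr ?_)
    rw [hW]
    exact h
  have hP : W.Nonsingular 0 0 := hns 0 0 (by ring)
  have hP2 : W.Nonsingular ((2*α-1)*(α-1)) ((2*α-1)^2*(α-1)^2/α) := hns _ _ (by field_simp; ring_nf; try field_simp [hα, h1, h2]; try ring)
  have hP3 : W.Nonsingular ((2*α-1)*(α-1)/α) ((2*α-1)*(α-1)^2/α) := hns _ _ (by field_simp; ring_nf; try field_simp [hα, h1, h2]; try ring)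
  have hP4 : W.Nonsingular (α*(α-1)) (α*(α-1)^2) := hns _ _ (by field_simp; ring_nf; try field_simp [hα, h1, h2]; try ring)
  have hP5 : W.Nonsingular ((2*α-1)*(α-1)/α) ((2*α-1)^2*(α-1)^2/α^2) := hns _ _ (by field_simp; ring_nf; try field_simp [hα, h1, h2]; try ring)
  have hP6 : W.Nonsingular ((2*α-1)*(α-1)) 0 := hns _ _ (by field_simp; ring_nf; try field_simp [hα, h1, h2]; try ring)
  have hP7 : W.Nonsingular 0 ((2*α-1)*(α-1)) := hns _ _ (by field_simp; ring_nf; try field_simp [hα, h1, h2]; try ring)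
  have hnegY : ∀ x y : K, W.negY x y = -y - (1 - (2*α-1)*(α-1)/α) * x + (2*α-1)*(α-1) := by
    intro x y
    rw [hW, WeierstrassCurve.Affine.negY]
    ring
  set P : W.Point := Point.some _ _ hP with hPdef
  -- addition steps
  have hy1 : (0:K) ≠ W.negY 0 0 := by rw [hnegY]; simpa using hb.symm
  have s1 : Point.some _ _ hP + Point.some _ _ hP = Point.some _ _ hP2 := by
    rw [add_self_of_Y_ne hy1]
    refine some_congr' _ _ ?_ ?_ <;>
      rw [slope_of_Y_ne rfl hy1] <;>
      simp only [hW, WeierstrassCurve.Affine.addX, WeierstrassCurve.Affine.addY,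
        WeierstrassCurve.Affine.negAddY, WeierstrassCurve.Affine.negY] <;>
      field_simp [hα, h1, h2] <;> ring_nf <;> (try (field_simp [hα, h1, h2]; ring_nf)) <;> (try (field_simp [hα, h1, h2]; ring_nf)) <;> try ring
  have hx2 : ((2*α-1)*(α-1) : K) ≠ 0 := hb
  have s2 : Point.some _ _ hP2 + Point.some _ _ hP = Point.some _ _ hP3 := by
    have hsl : W.slope ((2*α-1)*(α-1)) 0 ((2*α-1)^2*(α-1)^2/α) 0 = ((2*α-1)*(α-1)/α) := by
      rw [slope_of_X_ne hx2]; field_simp [hα, h1, h2]; try ring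
    rw [add_of_X_ne hx2]
    refine some_congr' _ _ ?_ ?_ <;>
      rw [hsl] <;>
      simp only [hW, WeierstrassCurve.Affine.addX, WeierstrassCurve.Affine.addY,
        WeierstrassCurve.Affine.negAddY, WeierstrassCurve.Affine.negY] <;>
      field_simp [hα, h1, h2] <;> ring_nf <;> (try (field_simp [hα, h1, h2]; ring_nf)) <;> (try (field_simp [hα, h1, h2]; ring_nf)) <;> try ring
  have hx3 : ((2*α-1)*(α-1)/α : K) ≠ 0 := div_ne_zero hb hα
  have s3 : Point.some _ _ hP3 + Point.some _ _ hP = Point.some _ _ hP4 := by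
    have hsl : W.slope ((2*α-1)*(α-1)/α) 0 ((2*α-1)*(α-1)^2/α) 0 = (α-1) := by
      rw [slope_of_X_ne hx3]; field_simp [hα, h1, h2]; try ring
    rw [add_of_X_ne hx3]
    refine some_congr' _ _ ?_ ?_ <;>
      rw [hsl] <;>
      simp only [hW, WeierstrassCurve.Affine.addX, WeierstrassCurve.Affine.addY,
        WeierstrassCurve.Affine.negAddY, WeierstrassCurve.Affine.negY] <;>
      field_simp [hα, h1, h2] <;> ring_nf <;> (try (field_simp [hα, h1, h2]; ring_nf)) <;> (try (field_simp [hα, h1, h2]; ring_nf)) <;> try ring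
  have hx4 : (α*(α-1) : K) ≠ 0 := mul_ne_zero hα h1
  have s4 : Point.some _ _ hP4 + Point.some _ _ hP = Point.some _ _ hP5 := by
    have hsl : W.slope (α*(α-1)) 0 (α*(α-1)^2) 0 = (α-1) := by
      rw [slope_of_X_ne hx4]; field_simp [hα, h1, h2]; try ring
    rw [add_of_X_ne hx4]
    refine some_congr' _ _ ?_ ?_ <;>
      rw [hsl] <;>
      simp only [hW, WeierstrassCurve.Affine.addX, WeierstrassCurve.Affine.addY,
        WeierstrassCurve.Affine.negAddY, WeierstrassCurve.Affine.negY] <;>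
      field_simp [hα, h1, h2] <;> ring_nf <;> (try (field_simp [hα, h1, h2]; ring_nf)) <;> (try (field_simp [hα, h1, h2]; ring_nf)) <;> try ring
  have s5 : Point.some _ _ hP5 + Point.some _ _ hP = Point.some _ _ hP6 := by
    have hsl : W.slope ((2*α-1)*(α-1)/α) 0 ((2*α-1)^2*(α-1)^2/α^2) 0 = ((2*α-1)*(α-1)/α) := by
      rw [slope_of_X_ne hx3]; field_simp [hα, h1, h2]; try ring
    rw [add_of_X_ne hx3]
    refine some_congr' _ _ ?_ ?_ <;>
      rw [hsl] <;>
      simp only [hW, WeierstrassCurve.Affine.addX, WeierstrassCurve.Affine.addY,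
        WeierstrassCurve.Affine.negAddY, WeierstrassCurve.Affine.negY] <;>
      field_simp [hα, h1, h2] <;> ring_nf <;> (try (field_simp [hα, h1, h2]; ring_nf)) <;> (try (field_simp [hα, h1, h2]; ring_nf)) <;> try ring
  have s6 : Point.some _ _ hP6 + Point.some _ _ hP = Point.some _ _ hP7 := by
    have hsl : W.slope ((2*α-1)*(α-1)) 0 (0) 0 = (0) := by
      rw [slope_of_X_ne hx2]; field_simp [hα, h1, h2]; try ring
    rw [add_of_X_ne hx2]
    refine some_congr' _ _ ?_ ?_ <;>
      rw [hsl] <;>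
      simp only [hW, WeierstrassCurve.Affine.addX, WeierstrassCurve.Affine.addY,
        WeierstrassCurve.Affine.negAddY, WeierstrassCurve.Affine.negY] <;>
      field_simp [hα, h1, h2] <;> ring_nf <;> (try (field_simp [hα, h1, h2]; ring_nf)) <;> (try (field_simp [hα, h1, h2]; ring_nf)) <;> try ring
  have s7 : Point.some _ _ hP7 + Point.some _ _ hP = 0 := by
    refine add_of_Y_eq rfl ?_
    rw [hnegY]
    ring
  -- nsmul values
  have e1 : (1:ℕ) • P = Point.some _ _ hP := one_nsmul P
  have e2 : (2:ℕ) • P = Point.some _ _ hP2 := by rw [two_nsmul, hPdef, s1]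
  have e3 : (3:ℕ) • P = Point.some _ _ hP3 := by
    rw [show (3:ℕ) = 2+1 from rfl, succ_nsmul, e2, hPdef, s2]
  have e4 : (4:ℕ) • P = Point.some _ _ hP4 := by
    rw [show (4:ℕ) = 3+1 from rfl, succ_nsmul, e3, hPdef, s3]
  have e5 : (5:ℕ) • P = Point.some _ _ hP5 := by
    rw [show (5:ℕ) = 4+1 from rfl, succ_nsmul, e4, hPdef, s4]
  have e6 : (6:ℕ) • P = Point.some _ _ hP6 := by
    rw [show (6:ℕ) = 5+1 from rfl, succ_nsmul, e5, hPdef, s5]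
  have e7 : (7:ℕ) • P = Point.some _ _ hP7 := by
    rw [show (7:ℕ) = 6+1 from rfl, succ_nsmul, e6, hPdef, s6]
  have e8 : (8:ℕ) • P = 0 := by
    rw [show (8:ℕ) = 7+1 from rfl, succ_nsmul, e7, hPdef, s7]
  have hord : addOrderOf P = 8 := by
    have := addOrderOf_eq_prime_pow (x := P) (p := 2) (n := 2)
      (by
        intro h
        rw [show (2:ℕ)^2 = 4 from rfl, e4] at h
        exact some_ne_zero _ h)
      (by rw [show (2:ℕ)^(2+1) = 8 from rfl, e8])
    simpa using this
  -- roots of unity facts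
  have hz8 : ζ ^ 8 = 1 := hζ.pow_eq_one
  have hz4 : ζ ^ 4 = -1 := by
    have h48 : (ζ^4 - 1) * (ζ^4 + 1) = 0 := by linear_combination hz8
    rcases mul_eq_zero.mp h48 with h | h
    · exact absurd (by linear_combination h : ζ^4 = 1)
        (hζ.pow_ne_one_of_pos_of_lt (by norm_num) (by norm_num))
    · linear_combination h
  have hz5 : ζ ^ 5 = -ζ := by linear_combination ζ * hz4
  have hz6 : ζ ^ 6 = -ζ^2 := by linear_combination ζ^2 * hz4
  have hz7 : ζ ^ 7 = -ζ^3 := by linear_combination ζ^3 * hz4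
  have hzinv : ζ⁻¹ = -ζ^3 := by
    refine inv_eq_of_mul_eq_one_right ?_
    linear_combination -hz4
  refine ⟨hP, hord, ?_⟩
  have hIcc : Finset.Icc (1:ℕ) 7 = {1,2,3,4,5,6,7} := rfl
  rw [hIcc]
  rw [Finset.sum_insert (by decide), Finset.sum_insert (by decide),
    Finset.sum_insert (by decide), Finset.sum_insert (by decide),
    Finset.sum_insert (by decide), Finset.sum_insert (by decide), Finset.sum_singleton]
  rw [e1, e2, e3, e4, e5, e6, e7]
  simp only [ptX_some]
  rw [hz4, hz5, hz6, hz7, hzinv, pow_one]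
  field_simp
  ring
end
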